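/- For fixed probability densities p and q on a measure space, the quantity (α/(1-α))·log ∫ p·q^(α-1) dμ − (1/(1-α))·log ∫ p^α dμ + log ∫ q^α dμ tends to ∫ p·log(p/q) dμ (the Kullback–Leibler divergence) as α → 1. -/
import Mathlib

open MeasureTheory Filter

/-- For `0 < δ` and `0 < t`, `|log t| ≤ (t^δ + t^(-δ))/δ`. -/
lemma abs_log_le_rpow_add_rpow_div (δ t : ℝ) (hδ : 0 < δ) (ht : 0 < t) :
    |Real.log t| ≤ (t ^ δ + t ^ (-δ)) / δ := by
  have key : ∀ s : ℝ, 0 < s → Real.log s ≤ s ^ δ / δ := by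
    intro s hs
    have h1 := Real.log_le_sub_one_of_pos (Real.rpow_pos_of_pos hs δ)
    rw [Real.log_rpow hs] at h1
    rw [le_div_iff₀ hδ, mul_comm]
    linarith
  have hpos : (0:ℝ) < t ^ δ := Real.rpow_pos_of_pos ht δ
  have hneg : (0:ℝ) < t ^ (-δ) := Real.rpow_pos_of_pos ht (-δ)
  have h1 : Real.log t ≤ t ^ δ / δ := key t ht
  have h2 : -Real.log t ≤ t ^ (-δ) / δ := by
    have h := key t⁻¹ (inv_pos.mpr ht)
    rw [Real.log_inv, Real.inv_rpow ht.le, ← Real.rpow_neg ht.le] at h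
    exact h
  have hs : (t ^ δ + t ^ (-δ)) / δ = t ^ δ / δ + t ^ (-δ) / δ := add_div _ _ _
  rw [abs_le, hs]
  constructor
  · have := div_pos hpos hδ
    linarith
  · have := div_pos hneg hδ
    linarith

/-- As α → 1, the relative α-entropy of fixed probability densities `p`, `q` tends to the
Kullback–Leibler divergence `∫ p log(p/q)`. -/
theorem relative_alpha_entropy_tendsto_KL
    {X : Type*} [MeasurableSpace X] (μ : Measure X)
    (p q : X → ℝ)
    (hpm : Measurable p) (hqm : Measurable q)
    (hp0 : ∀ x, 0 ≤ p x) (hq0 : ∀ x, 0 ≤ q x)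
    (hp1 : ∫ x, p x ∂μ = 1) (hq1 : ∫ x, q x ∂μ = 1)
    (hsupp : ∀ x, 0 < p x ↔ 0 < q x)
    (hI1 : ∀ᶠ α in nhds (1 : ℝ), Integrable (fun x => p x * q x ^ (α - 1)) μ)
    (hI2 : ∀ᶠ α in nhds (1 : ℝ), Integrable (fun x => p x ^ α) μ)
    (hI3 : ∀ᶠ α in nhds (1 : ℝ), Integrable (fun x => q x ^ α) μ)
    (hD1 : ∀ᶠ α in nhds (1 : ℝ),
      DifferentiableAt ℝ (fun β : ℝ => ∫ x, p x * q x ^ (β - 1) ∂μ) α)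
    (hD2 : ∀ᶠ α in nhds (1 : ℝ),
      DifferentiableAt ℝ (fun β : ℝ => ∫ x, p x ^ β ∂μ) α)
    (hD3 : ∀ᶠ α in nhds (1 : ℝ),
      DifferentiableAt ℝ (fun β : ℝ => ∫ x, q x ^ β ∂μ) α)
    (hswap1 : ∀ᶠ α in nhds (1 : ℝ),
      deriv (fun β : ℝ => ∫ x, p x * q x ^ (β - 1) ∂μ) α
        = ∫ x, p x * (q x ^ (α - 1) * Real.log (q x)) ∂μ)
    (hswap2 : ∀ᶠ α in nhds (1 : ℝ),
      deriv (fun β : ℝ => ∫ x, p x ^ β ∂μ) α = ∫ x, p x ^ α * Real.log (p x) ∂μ)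
    (hswap3 : ∀ᶠ α in nhds (1 : ℝ),
      deriv (fun β : ℝ => ∫ x, q x ^ β ∂μ) α = ∫ x, q x ^ α * Real.log (q x) ∂μ)
    (hKL : Integrable (fun x => p x * Real.log (p x / q x)) μ) :
    Tendsto (fun α : ℝ =>
        (α / (1 - α)) * Real.log (∫ x, p x * q x ^ (α - 1) ∂μ)
          - (1 / (1 - α)) * Real.log (∫ x, p x ^ α ∂μ)
          + Real.log (∫ x, q x ^ α ∂μ))
      (nhdsWithin (1 : ℝ) {1}ᶜ)
      (nhds (∫ x, p x * Real.log (p x / q x) ∂μ)) := by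
  set F : ℝ → ℝ := fun α => ∫ x, p x * q x ^ (α - 1) ∂μ with hFdef
  set G : ℝ → ℝ := fun α => ∫ x, p x ^ α ∂μ with hGdef
  set H : ℝ → ℝ := fun α => ∫ x, q x ^ α ∂μ with hHdef
  have hF1 : F 1 = 1 := by
    rw [hFdef]
    simp only [sub_self, Real.rpow_zero, mul_one]
    exact hp1
  have hG1 : G 1 = 1 := by
    rw [hGdef]
    simp only [Real.rpow_one]
    exact hp1
  have hH1 : H 1 = 1 := by
    rw [hHdef]
    simp only [Real.rpow_one]
    exact hq1
  -- derivative values at 1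
  have hdF : deriv F 1 = ∫ x, p x * Real.log (q x) ∂μ := by
    have h := hswap1.self_of_nhds
    rw [h]
    simp only [sub_self, Real.rpow_zero, one_mul]
  have hdG : deriv G 1 = ∫ x, p x * Real.log (p x) ∂μ := by
    have h := hswap2.self_of_nhds
    rw [h]
    simp only [Real.rpow_one]
  -- Integrability of p log p and p log q
  obtain ⟨ε, hε, hball⟩ := Metric.eventually_nhds_iff.mp (hI1.and hI2)
  set δ : ℝ := min (ε / 2) (1 / 2) with hδdef
  have hδ : 0 < δ := lt_min (by linarith) (by norm_num)
  have hδ1 : δ < 1 := lt_of_le_of_lt (min_le_right _ _) (by norm_num)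
  have hmem : ∀ a : ℝ, |a - 1| = δ → Integrable (fun x => p x * q x ^ (a - 1)) μ ∧
      Integrable (fun x => p x ^ a) μ := by
    intro a ha
    apply hball
    rw [Real.dist_eq, ha]
    exact lt_of_le_of_lt (min_le_left _ _) (by linarith)
  have hplus := hmem (1 + δ) (by rw [show (1:ℝ) + δ - 1 = δ by ring, abs_of_pos hδ])
  have hminus := hmem (1 - δ) (by rw [show (1:ℝ) - δ - 1 = -δ by ring, abs_neg, abs_of_pos hδ])
  have iF1 : Integrable (fun x => p x * q x ^ δ) μ := by
    have := hplus.1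
    simpa [show (1:ℝ) + δ - 1 = δ by ring] using this
  have iF2 : Integrable (fun x => p x * q x ^ (-δ)) μ := by
    have := hminus.1
    simpa [show (1:ℝ) - δ - 1 = -δ by ring] using this
  have iG1 : Integrable (fun x => p x ^ ((1:ℝ) + δ)) μ := hplus.2
  have iG2 : Integrable (fun x => p x ^ ((1:ℝ) - δ)) μ := hminus.2
  have hPlogP : Integrable (fun x => p x * Real.log (p x)) μ := by
    refine ((iG1.add iG2).div_const δ).mono
      ((hpm.mul (Real.measurable_log.comp hpm)).aestronglyMeasurable)
      (Filter.Eventually.of_forall fun x => ?_)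
    rcases eq_or_lt_of_le (hp0 x) with hx | hx
    · simp only [← hx, zero_mul, norm_zero]
      exact norm_nonneg _
    · have e1 : p x ^ ((1:ℝ) + δ) = p x * p x ^ δ := by
        rw [Real.rpow_add hx, Real.rpow_one]
      have e2 : p x ^ ((1:ℝ) - δ) = p x * p x ^ (-δ) := by
        rw [show (1:ℝ) - δ = 1 + (-δ) by ring, Real.rpow_add hx, Real.rpow_one]
      calc ‖p x * Real.log (p x)‖ = p x * |Real.log (p x)| := by
            rw [Real.norm_eq_abs, abs_mul, abs_of_nonneg (hp0 x)]
        _ ≤ p x * ((p x ^ δ + p x ^ (-δ)) / δ) :=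
            mul_le_mul_of_nonneg_left (abs_log_le_rpow_add_rpow_div δ _ hδ hx) (hp0 x)
        _ = (p x ^ ((1:ℝ) + δ) + p x ^ ((1:ℝ) - δ)) / δ := by rw [e1, e2]; ring
        _ ≤ ‖(p x ^ ((1:ℝ) + δ) + p x ^ ((1:ℝ) - δ)) / δ‖ := le_abs_self _
  have hPlogQ : Integrable (fun x => p x * Real.log (q x)) μ := by
    refine ((iF1.add iF2).div_const δ).mono
      ((hpm.mul (Real.measurable_log.comp hqm)).aestronglyMeasurable)
      (Filter.Eventually.of_forall fun x => ?_)
    rcases eq_or_lt_of_le (hp0 x) with hx | hx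
    · simp only [← hx, zero_mul, norm_zero]
      exact norm_nonneg _
    · have hqx : 0 < q x := (hsupp x).mp hx
      calc ‖p x * Real.log (q x)‖ = p x * |Real.log (q x)| := by
            rw [Real.norm_eq_abs, abs_mul, abs_of_nonneg (hp0 x)]
        _ ≤ p x * ((q x ^ δ + q x ^ (-δ)) / δ) :=
            mul_le_mul_of_nonneg_left (abs_log_le_rpow_add_rpow_div δ _ hδ hqx) (hp0 x)
        _ = (p x * q x ^ δ + p x * q x ^ (-δ)) / δ := by ring
        _ ≤ ‖(p x * q x ^ δ + p x * q x ^ (-δ)) / δ‖ := le_abs_self _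
  -- KL identity
  have hKLeq : (∫ x, p x * Real.log (p x) ∂μ) - (∫ x, p x * Real.log (q x) ∂μ)
      = ∫ x, p x * Real.log (p x / q x) ∂μ := by
    rw [← integral_sub hPlogP hPlogQ]
    apply integral_congr_ae
    apply Filter.Eventually.of_forall
    intro x
    rcases eq_or_lt_of_le (hp0 x) with hx | hx
    · simp [← hx]
    · have hqx : 0 < q x := (hsupp x).mp hx
      show p x * Real.log (p x) - p x * Real.log (q x) = p x * Real.log (p x / q x)
      rw [Real.log_div (ne_of_gt hx) (ne_of_gt hqx)]
      ring
  -- slopes of log ∘ F and log ∘ G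
  have hA : HasDerivAt (fun α => Real.log (F α)) (∫ x, p x * Real.log (q x) ∂μ) 1 := by
    have h := (hD1.self_of_nhds.hasDerivAt).log (by rw [hF1]; norm_num)
    rw [hF1, div_one, hdF] at h
    exact h
  have hB : HasDerivAt (fun α => Real.log (G α)) (∫ x, p x * Real.log (p x) ∂μ) 1 := by
    have h := (hD2.self_of_nhds.hasDerivAt).log (by rw [hG1]; norm_num)
    rw [hG1, div_one, hdG] at h
    exact h
  have hAs := hasDerivAt_iff_tendsto_slope.mp hA
  have hBs := hasDerivAt_iff_tendsto_slope.mp hB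
  have hC : Tendsto (fun α => Real.log (H α)) (nhdsWithin (1:ℝ) {1}ᶜ) (nhds 0) := by
    have hHc : ContinuousAt H 1 := hD3.self_of_nhds.continuousAt
    have hlc : ContinuousAt Real.log (H 1) := Real.continuousAt_log (by rw [hH1]; norm_num)
    have h := (hlc.comp hHc).tendsto.mono_left
      (nhdsWithin_le_nhds : nhdsWithin (1:ℝ) {1}ᶜ ≤ nhds 1)
    simpa [Function.comp_def, hH1] using h
  have hneg : Tendsto (fun α : ℝ => -α) (nhdsWithin (1:ℝ) {1}ᶜ) (nhds (-1)) :=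
    (tendsto_id.neg).mono_left nhdsWithin_le_nhds
  have hg : Tendsto (fun α : ℝ =>
      (-α) * slope (fun β => Real.log (F β)) 1 α + slope (fun β => Real.log (G β)) 1 α
        + Real.log (H α))
      (nhdsWithin (1:ℝ) {1}ᶜ)
      (nhds ((-1) * (∫ x, p x * Real.log (q x) ∂μ) + (∫ x, p x * Real.log (p x) ∂μ) + 0)) :=
    ((hneg.mul hAs).add hBs).add hC
  have hval : (-1) * (∫ x, p x * Real.log (q x) ∂μ) + (∫ x, p x * Real.log (p x) ∂μ) + 0
      = ∫ x, p x * Real.log (p x / q x) ∂μ := by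
    rw [← hKLeq]; ring
  rw [hval] at hg
  refine hg.congr' ?_
  filter_upwards [self_mem_nhdsWithin] with α hα
  have hne : α - 1 ≠ 0 := sub_ne_zero.mpr (by simpa using hα)
  have hne' : (1:ℝ) - α ≠ 0 := by intro h; apply hne; linarith [sub_eq_zero.mp h]
  rw [slope_def_field, slope_def_field, hF1, hG1, Real.log_one]
  field_simp
  ring
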